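/- Let P_n denote the path graph on n vertices v₁,…,v_n, and let u = v_i, v = v_j with i < j. If j − i is even then σ(P_n₋ᵤ)·σ(P_n₋ᵥ) < σ(P_n)·σ(P_n₋ᵤ₋ᵥ), and if j − i is odd then σ(P_n₋ᵤ)·σ(P_n₋ᵥ) > σ(P_n)·σ(P_n₋ᵤ₋ᵥ). -/

import Mathlib

open scoped Classical

/-- The number of independent vertex sets of `G` avoiding the set `W`
(i.e. `σ(G₋W)`, the number of independent sets of `G` with `W` deleted). -/
noncomputable def sigmaDel {V : Type*} [Fintype V] (G : SimpleGraph V) (W : Set V) : ℕ :=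
  (Finset.univ.filter
    (fun s : Finset V => (∀ v ∈ s, v ∉ W) ∧ ∀ u ∈ s, ∀ v ∈ s, ¬ G.Adj u v)).card

/-- The number of independent vertex sets of `G`. -/
noncomputable def sigmaG {V : Type*} [Fintype V] (G : SimpleGraph V) : ℕ :=
  sigmaDel G ∅


section MSAux
open Finset Nat


noncomputable def goodCount (W : Finset ℕ) (n : ℕ) : ℕ :=
  ((Finset.range n).powerset.filter
    (fun s => (∀ a ∈ s, a ∉ W) ∧ ∀ a ∈ s, a + 1 ∉ s)).card

lemma goodCount_succ_of_mem (W : Finset ℕ) (n : ℕ) (h : n ∈ W) :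
    goodCount W (n + 1) = goodCount W n := by
  unfold goodCount
  congr 1
  ext s
  simp only [mem_filter, mem_powerset]
  constructor
  · rintro ⟨hsub, hW, hc⟩
    refine ⟨fun a ha => ?_, hW, hc⟩
    have := hsub ha
    have hne : a ≠ n := fun he => hW a ha (he ▸ h)
    simp only [mem_range] at this ⊢
    omega
  · rintro ⟨hsub, hW, hc⟩
    exact ⟨hsub.trans (by simp [range_subset]; intro x hx; omega), hW, hc⟩

lemma goodCount_rec (W : Finset ℕ) (n : ℕ) :
    goodCount W (n + 2) =
      goodCount W (n + 1) + if n + 1 ∈ W then 0 else goodCount W n := by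
  classical
  unfold goodCount
  set p : Finset ℕ → Prop :=
    fun s => (∀ a ∈ s, a ∉ W) ∧ ∀ a ∈ s, a + 1 ∉ s with hp
  set S := (Finset.range (n+2)).powerset.filter p with hS
  have hsplit : S.card = (S.filter (fun s => ¬ (n+1) ∈ s)).card +
      (S.filter (fun s => (n+1) ∈ s)).card := by
    rw [add_comm, card_filter_add_card_filter_not (p := fun s => (n+1) ∈ s)]
  have h1 : (S.filter (fun s => ¬ (n+1) ∈ s)) =
      (Finset.range (n+1)).powerset.filter p := by
    ext s
    simp only [hS, mem_filter, mem_powerset]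
    constructor
    · rintro ⟨⟨hsub, hps⟩, hn⟩
      refine ⟨fun a ha => ?_, hps⟩
      have := hsub ha
      simp only [mem_range] at this ⊢
      rcases Nat.lt_succ_iff_lt_or_eq.mp this with h' | h'
      · exact h'
      · exact absurd (h' ▸ ha) hn
    · rintro ⟨hsub, hps⟩
      refine ⟨⟨hsub.trans (by simp [range_subset]; intro x hx; omega), hps⟩, fun hn => ?_⟩
      have := hsub hn; simp at this
  have h2 : (S.filter (fun s => (n+1) ∈ s)).card =
      if n + 1 ∈ W then 0 else
        ((Finset.range n).powerset.filter p).card := by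
    split_ifs with hW
    · rw [Finset.card_eq_zero]
      ext s
      simp only [hS, hp, mem_filter, mem_powerset, notMem_empty, iff_false, not_and]
      rintro ⟨hsub, hW', hc⟩ hn
      exact hW' _ hn hW
    · refine Finset.card_bij' (fun s _ => s.erase (n+1))
        (fun t _ => insert (n+1) t) ?_ ?_ ?_ ?_
      · rintro s hs
        simp only [hS, hp, mem_filter, mem_powerset] at hs ⊢
        obtain ⟨⟨hsub, hWs, hcs⟩, hn1⟩ := hs
        refine ⟨fun a ha => ?_, fun a ha => hWs a (mem_of_mem_erase ha),
          fun a ha h' => hcs a (mem_of_mem_erase ha) (mem_of_mem_erase h')⟩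
        have ha' := mem_of_mem_erase ha
        have hlt := hsub ha'
        have hne : a ≠ n + 1 := ne_of_mem_erase ha
        have hnen : a ≠ n := by
          rintro rfl
          exact hcs a ha' hn1
        simp only [mem_range] at hlt ⊢
        omega
      · rintro t ht
        simp only [hS, hp, mem_filter, mem_powerset] at ht ⊢
        obtain ⟨hsub, hW', hc⟩ := ht
        refine ⟨⟨?_, ?_, ?_⟩, mem_insert_self _ _⟩
        · intro a ha
          rcases mem_insert.mp ha with rfl | ha
          · simp [mem_range]
          · have := hsub ha; simp only [mem_range] at this ⊢; omega
        · intro a ha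
          rcases mem_insert.mp ha with rfl | ha
          · exact hW
          · exact hW' a ha
        · intro a ha hA
          rcases mem_insert.mp ha with rfl | ha
          · rcases mem_insert.mp hA with h' | h'
            · omega
            · have := hsub h'; simp only [mem_range] at this; omega
          · rcases mem_insert.mp hA with h' | h'
            · have := hsub ha; simp only [mem_range] at this; omega
            · exact hc a ha h'
      · intro s hs
        simp only [mem_filter] at hs
        exact insert_erase hs.2
      · intro t ht
        simp only [mem_filter, mem_powerset] at ht
        have hn1t : n + 1 ∉ t := fun h => by have := ht.1 h; simp at this
        exact erase_insert hn1t
  rw [hsplit, h1, h2]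

lemma goodCount_insert_of_le (W : Finset ℕ) (j n : ℕ) (h : n ≤ j) :
    goodCount (insert j W) n = goodCount W n := by
  unfold goodCount
  congr 1
  apply Finset.filter_congr
  intro s hs
  simp only [mem_powerset] at hs
  constructor <;> rintro ⟨h1, h2⟩ <;> refine ⟨fun a ha => ?_, h2⟩
  · exact fun haW => h1 a ha (mem_insert_of_mem haW)
  · intro haW
    rcases mem_insert.mp haW with rfl | haW
    · have := hs ha; simp only [mem_range] at this; omega
    · exact h1 a ha haW

lemma goodCount_empty (n : ℕ) : goodCount ∅ n = Nat.fib (n + 2) := by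
  have H : ∀ n, goodCount ∅ n = Nat.fib (n+2) ∧ goodCount ∅ (n+1) = Nat.fib (n+3) := by
    intro n
    induction n with
    | zero =>
      constructor
      · unfold goodCount
        simp [Finset.filter_singleton]
      · unfold goodCount
        rw [show Finset.range 1 = ({0} : Finset ℕ) from rfl]
        rw [show ({0} : Finset ℕ).powerset = {∅, ({0} : Finset ℕ)} from by decide]
        rw [Finset.filter_insert, Finset.filter_singleton]
        norm_num
    | succ k ih =>
      refine ⟨ih.2, ?_⟩
      rw [goodCount_rec]
      simp only [Finset.notMem_empty, if_false]
      rw [ih.1, ih.2]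
      have h4 : Nat.fib (k+2+2) = Nat.fib (k+2) + Nat.fib (k+2+1) := Nat.fib_add_two
      ring_nf at h4 ⊢
      omega
  exact (H n).1

lemma fib_shift (g : ℕ → ℕ) (m a : ℕ) (h0 : g m = a) (h1 : g (m+1) = a)
    (hr : ∀ k, g (m+k+2) = g (m+k+1) + g (m+k)) :
    ∀ k, g (m+k) = a * Nat.fib (k+1) := by
  have H : ∀ k, g (m+k) = a * Nat.fib (k+1) ∧ g (m+k+1) = a * Nat.fib (k+2) := by
    intro k
    induction k with
    | zero => simpa using ⟨h0, h1⟩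
    | succ k ih =>
      constructor
      · rw [show m+(k+1) = m+k+1 by ring]
        rw [ih.2]
      · rw [show m+(k+1)+1 = m+k+2 by ring, hr k, ih.1, ih.2]
        have h4 : Nat.fib (k+1+2) = Nat.fib (k+1) + Nat.fib (k+1+1) := Nat.fib_add_two
        ring_nf at h4 ⊢
        rw [h4]
        ring
  exact fun k => (H k).1

lemma goodCount_single (i n : ℕ) (h : i ≤ n) :
    goodCount {i} n = Nat.fib (i+2) * Nat.fib (n-i+1) := by
  have key : ∀ k, goodCount {i} (i+k) = Nat.fib (i+2) * Nat.fib (k+1) := by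
    apply fib_shift
    · rw [show ({i} : Finset ℕ) = insert i ∅ from rfl, goodCount_insert_of_le _ _ _ le_rfl,
        goodCount_empty]
    · rw [goodCount_succ_of_mem _ _ (mem_singleton_self i),
        show ({i} : Finset ℕ) = insert i ∅ from rfl, goodCount_insert_of_le _ _ _ le_rfl,
        goodCount_empty]
    · intro k
      rw [goodCount_rec]
      have hni : i + k + 1 ∉ ({i} : Finset ℕ) := by simp only [Finset.mem_insert, Finset.mem_singleton]; omega
      simp [hni]
  have := key (n - i)
  rwa [show i + (n-i) = n by omega] at this

lemma goodCount_pair (i j n : ℕ) (hij : i < j) (hjn : j ≤ n) :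
    goodCount {i, j} n = Nat.fib (i+2) * Nat.fib (j-i+1) * Nat.fib (n-j+1) := by
  have hpair : ({i, j} : Finset ℕ) = insert j {i} := by
    rw [Finset.pair_comm]
  have key : ∀ k, goodCount {i, j} (j+k) =
      (Nat.fib (i+2) * Nat.fib (j-i+1)) * Nat.fib (k+1) := by
    apply fib_shift
    · rw [hpair, goodCount_insert_of_le _ _ _ le_rfl, goodCount_single i j hij.le]
    · rw [goodCount_succ_of_mem _ _ (by simp : j ∈ ({i,j} : Finset ℕ)),
        hpair, goodCount_insert_of_le _ _ _ le_rfl, goodCount_single i j hij.le]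
    · intro k
      rw [goodCount_rec]
      have hni : j + k + 1 ∉ ({i, j} : Finset ℕ) := by simp only [Finset.mem_insert, Finset.mem_singleton]; omega
      simp [hni]
  have := key (n - j)
  rw [show j + (n-j) = n by omega] at this
  exact this

lemma sigmaDel_eq_goodCount {n : ℕ} (W : Set (Fin n)) (W' : Finset ℕ)
    (hW : ∀ v : Fin n, v ∈ W ↔ (v : ℕ) ∈ W') :
    sigmaDel (SimpleGraph.pathGraph n) W = goodCount W' n := by
  unfold sigmaDel goodCount
  refine Finset.card_bij' (fun s _ => s.map Fin.valEmbedding)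
    (fun t ht => t.attachFin (fun m hm => by
      have := (Finset.mem_powerset.mp (Finset.mem_filter.mp ht).1) hm
      simpa using this)) ?_ ?_ ?_ ?_
  · intro s hs
    simp only [Finset.mem_filter, Finset.mem_univ, true_and] at hs
    obtain ⟨hWs, hadj⟩ := hs
    simp only [Finset.mem_filter, Finset.mem_powerset]
    refine ⟨?_, ?_, ?_⟩
    · intro m hm
      simp only [Finset.mem_map, Fin.valEmbedding_apply] at hm
      obtain ⟨v, hv, rfl⟩ := hm
      simp [Finset.mem_range]
    · intro m hm
      simp only [Finset.mem_map, Fin.valEmbedding_apply] at hm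
      obtain ⟨v, hv, rfl⟩ := hm
      exact fun hmem => hWs v hv ((hW v).mpr hmem)
    · intro m hm hm1
      simp only [Finset.mem_map, Fin.valEmbedding_apply] at hm hm1
      obtain ⟨v, hv, rfl⟩ := hm
      obtain ⟨w, hw, hw'⟩ := hm1
      exact hadj v hv w hw (SimpleGraph.pathGraph_adj.mpr (Or.inl hw'.symm))
  · intro t ht
    simp only [Finset.mem_filter, Finset.mem_powerset] at ht
    obtain ⟨hsub, hWt, hc⟩ := ht
    simp only [Finset.mem_filter, Finset.mem_univ, true_and]
    constructor
    · intro v hv hvW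
      rw [Finset.mem_attachFin] at hv
      exact hWt _ hv ((hW v).mp hvW)
    · intro u hu v hv hadj
      rw [Finset.mem_attachFin] at hu hv
      rcases SimpleGraph.pathGraph_adj.mp hadj with h' | h'
      · exact hc _ hu (h' ▸ hv)
      · exact hc _ hv (h' ▸ hu)
  · intro s _
    ext a
    simp [Finset.mem_attachFin, Fin.val_inj]
  · intro t ht
    simp only [Finset.mem_filter, Finset.mem_powerset] at ht
    ext m
    simp only [Finset.mem_map, Finset.mem_attachFin, Fin.valEmbedding_apply]
    constructor
    · rintro ⟨a, ha, rfl⟩; exact ha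
    · intro hm
      have hlt : m < n := by have := ht.1 hm; simpa using this
      exact ⟨⟨m, hlt⟩, hm, rfl⟩

lemma docagne (b : ℕ) : ∀ m : ℕ,
    (Nat.fib (m+1) : ℤ) * Nat.fib (m+b) - Nat.fib m * Nat.fib (m+b+1)
      = (-1)^m * Nat.fib b := by
  intro m
  induction m with
  | zero => simp
  | succ m ih =>
    have e1 : (Nat.fib (m+2) : ℤ) = Nat.fib m + Nat.fib (m+1) := by
      exact_mod_cast Nat.fib_add_two
    have e2 : (Nat.fib (m+b+2) : ℤ) = Nat.fib (m+b) + Nat.fib (m+b+1) := by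
      exact_mod_cast Nat.fib_add_two
    rw [show m+1+1 = m+2 from by ring, show m+1+b = m+b+1 from by ring,
      show m+b+1+1 = m+b+2 from by ring]
    linear_combination (Nat.fib (m+b+1) : ℤ) * e1 - (Nat.fib (m+1) : ℤ) * e2 - ih

lemma vajda (m b : ℕ) : ∀ a : ℕ,
    (Nat.fib (m+a) : ℤ) * Nat.fib (m+b)
      = Nat.fib m * Nat.fib (m+a+b) + (-1)^m * Nat.fib a * Nat.fib b := by
  have H : ∀ a : ℕ,
      ((Nat.fib (m+a) : ℤ) * Nat.fib (m+b)
        = Nat.fib m * Nat.fib (m+a+b) + (-1)^m * Nat.fib a * Nat.fib b) ∧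
      ((Nat.fib (m+(a+1)) : ℤ) * Nat.fib (m+b)
        = Nat.fib m * Nat.fib (m+(a+1)+b) + (-1)^m * Nat.fib (a+1) * Nat.fib b) := by
    intro a
    induction a with
    | zero =>
      constructor
      · simp
      · have hd := docagne b m
        rw [show m+(0+1) = m+1 from by ring, show m+(0+1)+b = m+b+1 from by ring,
          show (0:ℕ)+1 = 1 from rfl]
        simp only [Nat.fib_one]
        push_cast
        linear_combination hd
    | succ a ih =>
      refine ⟨ih.2, ?_⟩
      have e1 : (Nat.fib (m+a+2) : ℤ) = Nat.fib (m+a) + Nat.fib (m+a+1) := by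
        exact_mod_cast Nat.fib_add_two
      have e2 : (Nat.fib (a+2) : ℤ) = Nat.fib a + Nat.fib (a+1) := by
        exact_mod_cast Nat.fib_add_two
      have e3 : (Nat.fib (m+a+2+b) : ℤ) = Nat.fib (m+a+b) + Nat.fib (m+a+1+b) := by
        have h := Nat.fib_add_two (n := m+a+b)
        rw [show m+a+b+2 = m+a+2+b from by ring, show m+a+b+1 = m+a+1+b from by ring] at h
        exact_mod_cast h
      have i1 := ih.1
      have i2 := ih.2
      rw [show m+(a+1) = m+a+1 from by ring] at i2
      rw [show m+(a+1+1) = m+a+2 from by ring, show a+1+1 = a+2 from by ring]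
      linear_combination (Nat.fib (m+b) : ℤ) * e1 - ((-1:ℤ)^m * Nat.fib b) * e2
        - (Nat.fib m : ℤ) * e3 + i1 + i2
  exact fun a => (H a).1

end MSAux

theorem merrifield_simmons_pathGraph (n : ℕ) (i j : Fin n) (hij : i < j) :
    (Even ((j : ℕ) - (i : ℕ)) →
      sigmaDel (SimpleGraph.pathGraph n) {i} * sigmaDel (SimpleGraph.pathGraph n) {j} <
        sigmaG (SimpleGraph.pathGraph n) * sigmaDel (SimpleGraph.pathGraph n) {i, j}) ∧
    (Odd ((j : ℕ) - (i : ℕ)) →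
      sigmaG (SimpleGraph.pathGraph n) * sigmaDel (SimpleGraph.pathGraph n) {i, j} <
        sigmaDel (SimpleGraph.pathGraph n) {i} * sigmaDel (SimpleGraph.pathGraph n) {j}) := by
  classical
  have hJn : (j : ℕ) < n := j.isLt
  have hIJ : (i : ℕ) < (j : ℕ) := hij
  obtain ⟨D, E, hD, hn⟩ : ∃ D E, (j : ℕ) = (i : ℕ) + D + 1 ∧ n = (j : ℕ) + E + 1 :=
    ⟨(j:ℕ) - (i:ℕ) - 1, n - (j:ℕ) - 1, by omega, by omega⟩
  have hσ : sigmaG (SimpleGraph.pathGraph n) = Nat.fib ((i:ℕ)+D+E+4) := by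
    rw [sigmaG, sigmaDel_eq_goodCount _ ∅ (by simp), goodCount_empty,
      show n + 2 = (i:ℕ)+D+E+4 from by omega]
  have hσi : sigmaDel (SimpleGraph.pathGraph n) {i}
      = Nat.fib ((i:ℕ)+2) * Nat.fib (D+E+3) := by
    rw [sigmaDel_eq_goodCount _ {(i:ℕ)} (by intro v; simp [Fin.ext_iff]),
      goodCount_single _ _ (le_of_lt i.isLt),
      show n - (i:ℕ) + 1 = D+E+3 from by omega]
  have hσj : sigmaDel (SimpleGraph.pathGraph n) {j}
      = Nat.fib ((i:ℕ)+D+3) * Nat.fib (E+2) := by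
    rw [sigmaDel_eq_goodCount _ {(j:ℕ)} (by intro v; simp [Fin.ext_iff]),
      goodCount_single _ _ (le_of_lt j.isLt),
      show (j:ℕ) + 2 = (i:ℕ)+D+3 from by omega,
      show n - (j:ℕ) + 1 = E+2 from by omega]
  have hσij : sigmaDel (SimpleGraph.pathGraph n) {i, j}
      = Nat.fib ((i:ℕ)+2) * Nat.fib (D+2) * Nat.fib (E+2) := by
    rw [sigmaDel_eq_goodCount _ {(i:ℕ), (j:ℕ)} (by intro v; simp [Fin.ext_iff]),
      goodCount_pair _ _ _ hIJ (le_of_lt hJn),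
      show (j:ℕ) - (i:ℕ) + 1 = D+2 from by omega,
      show n - (j:ℕ) + 1 = E+2 from by omega]
  have hv := vajda (D+2) ((i:ℕ)+1) (E+1)
  rw [show D+2+(E+1)+((i:ℕ)+1) = (i:ℕ)+D+E+4 from by ring,
    show D+2+(E+1) = D+E+3 from by ring,
    show D+2+((i:ℕ)+1) = (i:ℕ)+D+3 from by ring] at hv
  have hposZ : (0:ℤ) < (Nat.fib (E+1) : ℤ) * (Nat.fib ((i:ℕ)+1) : ℤ) := by
    have h1 : 0 < Nat.fib (E+1) := Nat.fib_pos.mpr (Nat.succ_pos _)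
    have h2 : 0 < Nat.fib ((i:ℕ)+1) := Nat.fib_pos.mpr (Nat.succ_pos _)
    exact mul_pos (by exact_mod_cast h1) (by exact_mod_cast h2)
  have hC : 0 < Nat.fib ((i:ℕ)+2) * Nat.fib (E+2) :=
    Nat.mul_pos (Nat.fib_pos.mpr (Nat.succ_pos _)) (Nat.fib_pos.mpr (Nat.succ_pos _))
  have hsub : (j:ℕ) - (i:ℕ) = D + 1 := by omega
  constructor
  · intro hEven
    rw [hsub] at hEven
    have hDodd : Odd D := by
      rcases Nat.even_or_odd D with h | h
      · exact absurd hEven (by simp [Nat.even_add_one, h])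
      · exact h
    have hsign : ((-1:ℤ))^(D+2) = -1 := by
      rw [pow_add]
      simp [Odd.neg_one_pow hDodd]
    rw [hsign] at hv
    have keyZ : (Nat.fib (D+E+3) : ℤ) * Nat.fib ((i:ℕ)+D+3)
        < (Nat.fib (D+2) : ℤ) * Nat.fib ((i:ℕ)+D+E+4) := by
      rw [hv]; linarith
    have keyN : Nat.fib (D+E+3) * Nat.fib ((i:ℕ)+D+3)
        < Nat.fib (D+2) * Nat.fib ((i:ℕ)+D+E+4) := by exact_mod_cast keyZ
    rw [hσ, hσi, hσj, hσij]
    calc Nat.fib ((i:ℕ)+2) * Nat.fib (D+E+3) * (Nat.fib ((i:ℕ)+D+3) * Nat.fib (E+2))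
        = (Nat.fib ((i:ℕ)+2) * Nat.fib (E+2))
            * (Nat.fib (D+E+3) * Nat.fib ((i:ℕ)+D+3)) := by ring
      _ < (Nat.fib ((i:ℕ)+2) * Nat.fib (E+2))
            * (Nat.fib (D+2) * Nat.fib ((i:ℕ)+D+E+4)) :=
          mul_lt_mul_of_pos_left keyN hC
      _ = Nat.fib ((i:ℕ)+D+E+4) * (Nat.fib ((i:ℕ)+2) * Nat.fib (D+2) * Nat.fib (E+2)) := by
          ring
  · intro hOdd
    rw [hsub] at hOdd
    have hDeven : Even D := by
      rcases Nat.even_or_odd D with h | h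
      · exact h
      · exact absurd hOdd (by simp [Nat.odd_add_one, (Nat.not_even_iff_odd.mpr h)])
    have hsign : ((-1:ℤ))^(D+2) = 1 := by
      rw [pow_add]
      simp [Even.neg_one_pow hDeven]
    rw [hsign] at hv
    have keyZ : (Nat.fib (D+2) : ℤ) * Nat.fib ((i:ℕ)+D+E+4)
        < (Nat.fib (D+E+3) : ℤ) * Nat.fib ((i:ℕ)+D+3) := by
      rw [hv]; linarith
    have keyN : Nat.fib (D+2) * Nat.fib ((i:ℕ)+D+E+4)
        < Nat.fib (D+E+3) * Nat.fib ((i:ℕ)+D+3) := by exact_mod_cast keyZ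
    rw [hσ, hσi, hσj, hσij]
    calc Nat.fib ((i:ℕ)+D+E+4) * (Nat.fib ((i:ℕ)+2) * Nat.fib (D+2) * Nat.fib (E+2))
        = (Nat.fib ((i:ℕ)+2) * Nat.fib (E+2))
            * (Nat.fib (D+2) * Nat.fib ((i:ℕ)+D+E+4)) := by ring
      _ < (Nat.fib ((i:ℕ)+2) * Nat.fib (E+2))
            * (Nat.fib (D+E+3) * Nat.fib ((i:ℕ)+D+3)) :=
          mul_lt_mul_of_pos_left keyN hC
      _ = Nat.fib ((i:ℕ)+2) * Nat.fib (D+E+3) * (Nat.fib ((i:ℕ)+D+3) * Nat.fib (E+2)) := by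
          ring
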